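/- arXiv:2108.11203 — 9 statements merged into one kernel-verified Lean document; each statement's English description precedes it below -/
import Mathlib

section
/- Let (X,d) be a metric space. The metric d is not round (i.e., there exist x in X and r > 0 such that the closure of the open ball B(x,r) is a proper subset of the closed ball B[x,r]) if and only if there exists a nonempty open set U in X and a point x in X \ U such that the function y ↦ d(x,y) attains a minimum on U. -/
/-- A metric space is *round* if the closure of every open ball equals the
corresponding closed ball. -/
def IsRound (X : Type*) [MetricSpace X] : Prop :=
  ∀ (x : X) (r : ℝ), 0 < r → closure (Metric.ball x r) = Metric.closedBall x r

/-- The metric is not round iff there is a nonempty open set `U` and a point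
`x ∉ U` such that `y ↦ d x y` attains a minimum on `U`. -/
theorem not_round_iff_min {X : Type*} [MetricSpace X] :
    ¬ IsRound X ↔
      ∃ (U : Set X) (x : X), IsOpen U ∧ U.Nonempty ∧ x ∉ U ∧
        ∃ y ∈ U, ∀ z ∈ U, dist x y ≤ dist x z := by
  constructor
  · intro h
    unfold IsRound at h
    push_neg at h
    obtain ⟨x, r, hr, hne⟩ := h
    have hsub : closure (Metric.ball x r) ⊆ Metric.closedBall x r :=
      Metric.closure_ball_subset_closedBall
    have hns : ¬ Metric.closedBall x r ⊆ closure (Metric.ball x r) :=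
      fun h' => hne (hsub.antisymm h')
    obtain ⟨y, hy, hy'⟩ := Set.not_subset.mp hns
    refine ⟨(closure (Metric.ball x r))ᶜ, x, isClosed_closure.isOpen_compl, ⟨y, hy'⟩,
      ?_, y, hy', ?_⟩
    · simp only [Set.mem_compl_iff, not_not]
      exact subset_closure (Metric.mem_ball_self hr)
    · intro z hz
      have hz' : z ∉ Metric.ball x r := fun h' => hz (subset_closure h')
      have h1 : dist x y ≤ r := by
        rw [dist_comm]; exact Metric.mem_closedBall.mp hy
      have h2 : r ≤ dist x z := by
        rw [dist_comm]; exact not_lt.mp (fun h' => hz' (Metric.mem_ball.mpr h'))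
      linarith
  · rintro ⟨U, x, hU, hUne, hxU, y, hyU, hmin⟩ h
    have hxy : x ≠ y := fun h' => hxU (h' ▸ hyU)
    have hr : 0 < dist x y := dist_pos.mpr hxy
    have hc := h x (dist x y) hr
    have hyc : y ∈ Metric.closedBall x (dist x y) := by
      rw [Metric.mem_closedBall, dist_comm]
    rw [← hc] at hyc
    obtain ⟨z, hzU, hzb⟩ := (mem_closure_iff.mp hyc) U hU hyU
    have : dist x z < dist x y := by rw [dist_comm]; exact Metric.mem_ball.mp hzb
    exact absurd (hmin z hzU) (not_le.mpr this)
end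

section
/- Every complete metrically convex metric space is round: in such a space, for every x and r > 0, the closure of the open ball B(x,r) equals the closed ball B[x,r]. -/
/-- Key approximation lemma: in a complete metrically convex space, for any `x ≠ y`
there are points metrically between `x` and `y`, distinct from `y`, arbitrarily close
to `y`. -/
theorem key_between {X : Type*} [MetricSpace X] [CompleteSpace X]
    (hconv : ∀ x y : X, x ≠ y → ∃ z : X, z ≠ x ∧ z ≠ y ∧ dist x z + dist z y = dist x y)
    (x y : X) (hxy : x ≠ y) (ε : ℝ) (hε : 0 < ε) :
    ∃ z : X, z ≠ y ∧ dist x z + dist z y = dist x y ∧ dist z y < ε := by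
  classical
  -- the set of points metrically between `z` and `y`, distinct from `y`
  set S : X → Set X := fun z => {w | w ≠ y ∧ dist z w + dist w y = dist z y} with hS
  have hSself : ∀ z, z ≠ y → z ∈ S z := by
    intro z hz; exact ⟨hz, by simp⟩
  have htrans : ∀ z w v : X, w ∈ S z → v ∈ S w → v ∈ S z := by
    rintro z w v ⟨hw, hw2⟩ ⟨hv, hv2⟩
    refine ⟨hv, ?_⟩
    have h1 := dist_triangle z v y
    have h2 := dist_triangle z w v
    have h3 := dist_triangle w v y -- not needed maybe
    nlinarith [dist_nonneg (x := z) (y := v)]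
  have hne_img : ∀ z, z ≠ y → ((fun w => dist w y) '' S z).Nonempty := by
    intro z hz; exact ⟨dist z y, z, hSself z hz, rfl⟩
  have hbdd : ∀ z, BddBelow ((fun w => dist w y) '' S z) := by
    intro z
    refine ⟨0, ?_⟩
    rintro t ⟨w, -, rfl⟩
    exact dist_nonneg
  set m : X → ℝ := fun z => sInf ((fun w => dist w y) '' S z) with hm
  have hstep : ∀ z, z ≠ y → ∀ δ : ℝ, 0 < δ → ∃ w, w ∈ S z ∧ dist w y < m z + δ := by
    intro z hz δ hδ
    obtain ⟨t, ⟨w, hwS, rfl⟩, ht⟩ := Real.lt_sInf_add_pos (hne_img z hz) hδ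
    exact ⟨w, hwS, ht⟩
  have hm_le : ∀ w z, w ∈ S z → m z ≤ dist w y := by
    intro w z hw
    exact csInf_le (hbdd z) ⟨w, hw, rfl⟩
  -- the greedy sequence
  let F : ℕ → X → X := fun n z =>
    if h : z ≠ y then (hstep z h ((1/2 : ℝ)^n) (by positivity)).choose else z
  let seq : ℕ → X := fun n => Nat.rec x F n
  have hseq0 : seq 0 = x := rfl
  have hseqS : ∀ n, seq (n+1) = F n (seq n) := fun n => rfl
  have hstepn : ∀ n, seq n ≠ y →
      seq (n+1) ∈ S (seq n) ∧ dist (seq (n+1)) y < m (seq n) + (1/2 : ℝ)^n := by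
    intro n hn
    have h := (hstep (seq n) hn ((1/2 : ℝ)^n) (by positivity)).choose_spec
    have he : seq (n+1) = (hstep (seq n) hn ((1/2 : ℝ)^n) (by positivity)).choose := by
      rw [hseqS n]
      simp only [F, dif_pos hn]
    rw [he]
    exact h
  have hSx : ∀ n, seq n ∈ S x := by
    intro n
    induction n with
    | zero => rw [hseq0]; exact hSself x hxy
    | succ k ih =>
      exact htrans x (seq k) (seq (k+1)) ih (hstepn k ih.1).1
  have hne : ∀ n, seq n ≠ y := fun n => (hSx n).1
  set t : ℕ → ℝ := fun n => dist (seq n) y with ht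
  have hchain : ∀ n k, seq (n + k) ∈ S (seq n) := by
    intro n k
    induction k with
    | zero => exact hSself (seq n) (hne n)
    | succ j ih =>
      exact htrans (seq n) (seq (n+j)) (seq (n+j+1)) ih (hstepn (n+j) (hne _)).1
  have hdist_eq : ∀ n k, dist (seq n) (seq (n+k)) = t n - t (n+k) := by
    intro n k
    have := (hchain n k).2
    simp only [ht]; linarith
  have hanti : Antitone t := by
    intro a b hab
    obtain ⟨k, rfl⟩ := Nat.le.dest hab
    have := hdist_eq a k
    have h0 := dist_nonneg (x := seq a) (y := seq (a+k))
    linarith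
  have hbddt : BddBelow (Set.range t) := by
    refine ⟨0, ?_⟩
    rintro s ⟨n, rfl⟩
    exact dist_nonneg
  set L : ℝ := ⨅ n, t n with hL
  have hLle : ∀ n, L ≤ t n := fun n => ciInf_le hbddt n
  have hL0 : 0 ≤ L := le_ciInf fun n => dist_nonneg
  have htend : Filter.Tendsto t Filter.atTop (nhds L) :=
    tendsto_atTop_ciInf hanti hbddt
  -- Cauchy
  have hcauchy : CauchySeq seq := by
    rw [Metric.cauchySeq_iff']
    intro δ hδ
    have : ∀ᶠ n in Filter.atTop, t n < L + δ :=
      htend.eventually (Filter.Tendsto.eventually_lt_const (by linarith) Filter.tendsto_id)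
    obtain ⟨N, hN⟩ := this.exists_forall_of_atTop
    refine ⟨N, fun n hn => ?_⟩
    obtain ⟨k, rfl⟩ := Nat.le.dest hn
    rw [dist_comm, hdist_eq]
    have := hLle (N + k)
    have := hN N le_rfl
    linarith
  obtain ⟨zL, hzL⟩ := cauchySeq_tendsto_of_complete hcauchy
  have hzLy : dist zL y = L := by
    have h1 : Filter.Tendsto (fun n => dist (seq n) y) Filter.atTop (nhds (dist zL y)) :=
      hzL.dist tendsto_const_nhds
    exact tendsto_nhds_unique h1 htend
  have hdist_eq' : ∀ n mm : ℕ, n ≤ mm → dist (seq n) (seq mm) = t n - t mm := by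
    intro n mm hnm
    obtain ⟨k, rfl⟩ := Nat.le.dest hnm
    exact hdist_eq n k
  have hzLdist : ∀ n, dist (seq n) zL = t n - L := by
    intro n
    have h1 : Filter.Tendsto (fun k => dist (seq n) (seq k)) Filter.atTop
        (nhds (dist (seq n) zL)) := tendsto_const_nhds.dist hzL
    have h2 : Filter.Tendsto (fun k => t n - t k) Filter.atTop (nhds (t n - L)) :=
      tendsto_const_nhds.sub htend
    refine tendsto_nhds_unique_of_eventuallyEq h1 h2 ?_
    filter_upwards [Filter.eventually_ge_atTop n] with k hk
    exact hdist_eq' n k hk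
  have hzLS : zL ≠ y → ∀ n, zL ∈ S (seq n) := by
    intro hzy n
    refine ⟨hzy, ?_⟩
    rw [hzLdist n, hzLy]
    simp only [ht]
    ring
  -- L = 0
  have hLzero : L = 0 := by
    by_contra hne0
    have hLpos : 0 < L := lt_of_le_of_ne hL0 (Ne.symm hne0)
    have hzy : zL ≠ y := by
      intro h
      rw [h, dist_self] at hzLy
      exact hne0 hzLy.symm
    obtain ⟨w, hw1, hw2, hw3⟩ := hconv zL y hzy
    have hwS : w ∈ S zL := ⟨hw2, by rw [hw3]⟩
    have hwL : dist w y < L := by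
      have := dist_pos.mpr (Ne.symm hw1)
      rw [hzLy] at hw3
      linarith
    have hmw : ∀ n, m (seq n) ≤ dist w y := by
      intro n
      exact hm_le w (seq n) (htrans (seq n) zL w (hzLS hzy n) hwS)
    have hbound : ∀ n, t (n+1) < dist w y + (1/2 : ℝ)^n := by
      intro n
      have := (hstepn n (hne n)).2
      have := hmw n
      simp only [ht] at *
      linarith
    have h1 : Filter.Tendsto (fun n => t (n+1)) Filter.atTop (nhds L) :=
      htend.comp (Filter.tendsto_add_atTop_nat 1)
    have h2 : Filter.Tendsto (fun n : ℕ => dist w y + (1/2 : ℝ)^n) Filter.atTop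
        (nhds (dist w y + 0)) := by
      exact tendsto_const_nhds.add (tendsto_pow_atTop_nhds_zero_of_lt_one (by norm_num) (by norm_num))
    have hle : L ≤ dist w y + 0 :=
      le_of_tendsto_of_tendsto' h1 h2 (fun n => le_of_lt (hbound n))
    rw [add_zero] at hle
    linarith
  -- conclude
  rw [hLzero] at htend
  have : ∀ᶠ n in Filter.atTop, t n < ε :=
    htend.eventually (Filter.Tendsto.eventually_lt_const hε Filter.tendsto_id)
  obtain ⟨n, hn⟩ := this.exists
  exact ⟨seq n, hne n, (hSx n).2, hn⟩

/-- Every complete metrically convex metric space is round. -/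
theorem round_of_complete_metrically_convex {X : Type*} [MetricSpace X] [CompleteSpace X]
    (hconv : ∀ x y : X, x ≠ y → ∃ z : X, z ≠ x ∧ z ≠ y ∧ dist x z + dist z y = dist x y) :
    IsRound X := by
  intro x r hr
  refine Set.Subset.antisymm
    (closure_minimal Metric.ball_subset_closedBall Metric.isClosed_closedBall) ?_
  intro y hy
  rw [Metric.mem_closedBall] at hy
  rcases lt_or_eq_of_le hy with h | h
  · exact subset_closure (Metric.mem_ball.mpr h)
  · -- dist y x = r
    have hxy : x ≠ y := by
      intro he
      rw [he, dist_self] at h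
      linarith
    rw [Metric.mem_closure_iff]
    intro δ hδ
    obtain ⟨z, hz1, hz2, hz3⟩ := key_between hconv x y hxy δ hδ
    have hdxy : dist x y = r := by rw [dist_comm] at h; exact h
    have hzpos : 0 < dist z y := dist_pos.mpr hz1
    refine ⟨z, ?_, ?_⟩
    · rw [Metric.mem_ball, dist_comm]
      rw [hdxy] at hz2
      linarith
    · rw [dist_comm]; exact hz3
end

section
/- Let X be a metrizable space with at least two points that has an isolated point. Then no metric inducing the topology of X is sleek. -/
/-- The metric space structure `m` on `X` is *sleek*: the interior (with respect to the
topology induced by `m`) of every closed ball equals the corresponding open ball. -/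
def IsSleekM {X : Type*} (m : MetricSpace X) : Prop :=
  ∀ (x : X) (r : ℝ), 0 < r →
    @interior X m.toUniformSpace.toTopologicalSpace
        (@Metric.closedBall X m.toPseudoMetricSpace x r) =
      @Metric.ball X m.toPseudoMetricSpace x r

/-- A metrizable space with at least two points having an isolated point admits no
sleek metric inducing its topology. -/
theorem no_sleek_metric_of_isolated_point {X : Type*} [TopologicalSpace X] [Nontrivial X]
    (h : ∃ y : X, IsOpen ({y} : Set X)) :
    ∀ m : MetricSpace X,
      m.toUniformSpace.toTopologicalSpace = ‹TopologicalSpace X› → ¬ IsSleekM m := by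
  intro m hm hs
  obtain ⟨y, hy⟩ := h
  obtain ⟨z, hz⟩ := exists_ne y
  letI := m
  have hr : 0 < dist z y := dist_pos.2 hz
  have key := hs z (dist z y) hr
  rw [hm] at key
  have hyin : y ∈ interior (Metric.closedBall z (dist z y)) :=
    interior_maximal (by simp [Set.singleton_subset_iff, dist_comm]) hy rfl
  rw [key] at hyin
  exact absurd (Metric.mem_ball.1 hyin) (by rw [dist_comm]; exact lt_irrefl _)
end

section
/- Let X be a compact metrizable space with at least two points. Then no metric d inducing the topology of X is sleek, i.e., there exist x in X and r > 0 such that the interior of the closed ball B[x,r] strictly contains the open ball B(x,r). -/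
/-- A compact metrizable space with at least two points admits no sleek metric:
for any compatible metric there are `x` and `r > 0` such that the interior of the
closed ball `B[x,r]` strictly contains the open ball `B(x,r)`. -/
theorem compact_not_sleek {X : Type*} [TopologicalSpace X] [CompactSpace X] [Nontrivial X] :
    ∀ m : MetricSpace X,
      m.toUniformSpace.toTopologicalSpace = ‹TopologicalSpace X› →
      ∃ (x : X) (r : ℝ), 0 < r ∧
        @Metric.ball X m.toPseudoMetricSpace x r ⊂
          interior (@Metric.closedBall X m.toPseudoMetricSpace x r) := by
  intro m h
  obtain ⟨a, b, hab⟩ := exists_pair_ne X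
  subst h
  obtain ⟨y, -, hy⟩ := isCompact_univ.exists_isMaxOn ⟨a, trivial⟩
    ((continuous_const.dist continuous_id : Continuous fun z => dist a z).continuousOn)
  refine ⟨a, dist a y, ?_, ?_⟩
  · calc (0:ℝ) < dist a b := dist_pos.mpr hab
      _ ≤ dist a y := hy (Set.mem_univ b)
  · have hcb : Metric.closedBall a (dist a y) = Set.univ := by
      ext z; simpa [dist_comm] using hy (Set.mem_univ z)
    rw [hcb, interior_univ]
    constructor
    · exact Set.subset_univ _
    · intro hsub
      have := hsub (Set.mem_univ y)
      simp [Metric.mem_ball, dist_comm] at this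
end

section
/- Let X be a subspace of the real line with the induced Euclidean metric. If the induced metric on X is sleek (the interior in X of every closed ball of X equals the corresponding open ball), then the induced metric on X is round (the closure in X of every open ball of X equals the corresponding closed ball). -/
/-- A metric space is *sleek* if the interior of every closed ball equals the
corresponding open ball. -/
def IsSleek (X : Type*) [MetricSpace X] : Prop :=
  ∀ (x : X) (r : ℝ), 0 < r → interior (Metric.closedBall x r) = Metric.ball x r

/-- In a sleek subspace of ℝ, no point can be isolated while lying at distance
exactly `r` from some point. -/
lemma sleek_not_isolated (X : Set ℝ) (h : IsSleek X) (x y : X) (r : ℝ) (hr : 0 < r)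
    (hd : dist y x = r) (ε : ℝ) (hε : 0 < ε)
    (gap : ∀ w : X, dist w y < ε → w = y) : False := by
  have hmem : y ∈ interior (Metric.closedBall x r) := by
    rw [mem_interior_iff_mem_nhds, Metric.mem_nhds_iff]
    refine ⟨ε, hε, fun w hw => ?_⟩
    have hwy : w = y := gap w (by simpa [Metric.mem_ball] using hw)
    subst hwy
    simpa [Metric.mem_closedBall] using hd.le
  rw [h x r hr] at hmem
  have := Metric.mem_ball.mp hmem
  rw [hd] at this
  exact lt_irrefl r this

/-- If `y < z` in a sleek subspace of ℝ and there are no points of X in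
`(2y - z, y)`, we get a contradiction. -/
lemma sleek_gap_below (X : Set ℝ) (h : IsSleek X) (y z : X) (hyz : (y:ℝ) < z)
    (gap : ∀ w : X, (y:ℝ) - ((z:ℝ) - y) < w → (w:ℝ) < y → False) : False := by
  set s := (z:ℝ) - y with hs
  have hs0 : 0 < s := by simp only [hs]; linarith
  have hmem : y ∈ interior (Metric.closedBall z s) := by
    rw [mem_interior_iff_mem_nhds, Metric.mem_nhds_iff]
    refine ⟨s, hs0, fun w hw => ?_⟩
    have hw' : |(w:ℝ) - y| < s := by
      simpa [Subtype.dist_eq, Real.dist_eq] using hw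
    obtain ⟨h1, h2⟩ := abs_lt.mp hw'
    have hwy : (y:ℝ) ≤ w := by
      by_contra hlt
      push_neg at hlt
      exact gap w (by linarith) hlt
    have : |(w:ℝ) - z| ≤ s := abs_le.mpr ⟨by simp only [hs] at *; linarith,
      by simp only [hs] at *; linarith⟩
    simpa [Metric.mem_closedBall, Subtype.dist_eq, Real.dist_eq] using this
  rw [h z s hs0] at hmem
  have h' : |(y:ℝ) - z| < s := by
    simpa [Metric.mem_ball, Subtype.dist_eq, Real.dist_eq] using hmem
  rw [abs_sub_comm, abs_of_pos hs0] at h'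
  exact lt_irrefl s h'

/-- If `z < y` in a sleek subspace of ℝ and there are no points of X in
`(y, 2y - z)`, we get a contradiction. -/
lemma sleek_gap_above (X : Set ℝ) (h : IsSleek X) (y z : X) (hyz : (z:ℝ) < y)
    (gap : ∀ w : X, (y:ℝ) < w → (w:ℝ) < y + ((y:ℝ) - z) → False) : False := by
  set s := (y:ℝ) - z with hs
  have hs0 : 0 < s := by simp only [hs]; linarith
  have hmem : y ∈ interior (Metric.closedBall z s) := by
    rw [mem_interior_iff_mem_nhds, Metric.mem_nhds_iff]
    refine ⟨s, hs0, fun w hw => ?_⟩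
    have hw' : |(w:ℝ) - y| < s := by
      simpa [Subtype.dist_eq, Real.dist_eq] using hw
    obtain ⟨h1, h2⟩ := abs_lt.mp hw'
    have hwy : (w:ℝ) ≤ y := by
      by_contra hlt
      push_neg at hlt
      exact gap w hlt (by linarith)
    have : |(w:ℝ) - z| ≤ s := abs_le.mpr ⟨by simp only [hs] at *; linarith,
      by simp only [hs] at *; linarith⟩
    simpa [Metric.mem_closedBall, Subtype.dist_eq, Real.dist_eq] using this
  rw [h z s hs0] at hmem
  have h' : |(y:ℝ) - z| < s := by
    simpa [Metric.mem_ball, Subtype.dist_eq, Real.dist_eq] using hmem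
  rw [abs_of_pos hs0] at h'
  exact lt_irrefl s h'

/-- For a subspace of the real line with the induced Euclidean metric,
sleek implies round. -/
theorem round_of_sleek_subset_real (X : Set ℝ) (h : IsSleek X) : IsRound X := by
  intro x r hr
  refine Set.Subset.antisymm Metric.closure_ball_subset_closedBall ?_
  intro y hy
  by_contra hy'
  rw [Metric.mem_closure_iff] at hy'
  push_neg at hy'
  obtain ⟨ε, hε, hsep⟩ := hy'
  set ε' := min ε r with hε'
  have hε'0 : 0 < ε' := lt_min hε hr
  have hε'r : ε' ≤ r := min_le_right _ _
  have hsep' : ∀ b : X, b ∈ Metric.ball x r → ε' ≤ dist y b :=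
    fun b hb => le_trans (min_le_left _ _) (hsep b hb)
  have hd : dist y x ≤ r := Metric.mem_closedBall.mp hy
  rcases lt_or_eq_of_le hd with hlt | heq
  · exact absurd (hsep' y (Metric.mem_ball.mpr hlt)) (by simp [hε'0])
  · have habs : |(y:ℝ) - x| = r := by
      rw [← Real.dist_eq, ← Subtype.dist_eq]; exact heq
    rcases abs_eq hr.le |>.mp habs with hpos | hneg
    · -- y = x + r : gap on (y - ε', y)
      have gap : ∀ w : X, (y:ℝ) - ε' < w → (w:ℝ) < y → False := by
        intro w h1 h2
        have hwball : w ∈ Metric.ball x r := by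
          rw [Metric.mem_ball, Subtype.dist_eq, Real.dist_eq, abs_lt]
          constructor <;> linarith
        have := hsep' w hwball
        rw [Subtype.dist_eq, Real.dist_eq, abs_of_pos (by linarith)] at this
        linarith
      by_cases hz : ∃ z : X, (y:ℝ) < z ∧ (z:ℝ) < y + ε'
      · obtain ⟨z, hz1, hz2⟩ := hz
        exact sleek_gap_below X h y z hz1
          (fun w h1 h2 => gap w (by linarith) h2)
      · push_neg at hz
        refine sleek_not_isolated X h x y r hr heq ε' hε'0 (fun w hw => ?_)
        have hw' : |(w:ℝ) - y| < ε' := by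
          simpa [Subtype.dist_eq, Real.dist_eq] using hw
        obtain ⟨h1, h2⟩ := abs_lt.mp hw'
        rcases lt_trichotomy ((w:ℝ)) y with hc | hc | hc
        · exact absurd (gap w (by linarith) hc) not_false
        · exact Subtype.ext hc
        · exact absurd (hz w hc) (by push_neg; linarith)
    · -- y = x - r : gap on (y, y + ε')
      have gap : ∀ w : X, (y:ℝ) < w → (w:ℝ) < y + ε' → False := by
        intro w h1 h2
        have hwball : w ∈ Metric.ball x r := by
          rw [Metric.mem_ball, Subtype.dist_eq, Real.dist_eq, abs_lt]
          constructor <;> linarith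
        have := hsep' w hwball
        rw [Subtype.dist_eq, Real.dist_eq, abs_of_neg (by linarith)] at this
        linarith
      by_cases hz : ∃ z : X, (z:ℝ) < y ∧ (y:ℝ) - ε' < z
      · obtain ⟨z, hz1, hz2⟩ := hz
        exact sleek_gap_above X h y z hz1
          (fun w h1 h2 => gap w h1 (by linarith))
      · push_neg at hz
        refine sleek_not_isolated X h x y r hr heq ε' hε'0 (fun w hw => ?_)
        have hw' : |(w:ℝ) - y| < ε' := by
          simpa [Subtype.dist_eq, Real.dist_eq] using hw
        obtain ⟨h1, h2⟩ := abs_lt.mp hw'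
        rcases lt_trichotomy ((w:ℝ)) y with hc | hc | hc
        · exact absurd (hz w hc) (by push_neg; linarith)
        · exact Subtype.ext hc
        · exact absurd (gap w hc (by linarith)) not_false
end

section
/- Let (X,d) be a metric space and {A_α}_{α∈J} a family of subspaces such that for every α, β in J, the subspace A_α ∪ A_β with the induced metric is sleek. Then the union ∪_{α∈J} A_α with the induced metric is sleek. -/
/-- If every pairwise union `A α ∪ A β` of a family of subspaces of a metric space is
sleek (with the induced metric), then the union of the family is sleek. -/
theorem sleek_iUnion {X : Type*} [MetricSpace X] {J : Type*} (A : J → Set X)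
    (h : ∀ α β : J, IsSleek ↥(A α ∪ A β)) :
    IsSleek ↥(⋃ α, A α) := by
  intro x r hr
  apply subset_antisymm
  · intro y hy
    rw [mem_interior_iff_mem_nhds, Metric.mem_nhds_iff] at hy
    obtain ⟨ε, hε, hball⟩ := hy
    obtain ⟨α, hxα⟩ := Set.mem_iUnion.mp x.2
    obtain ⟨β, hyβ⟩ := Set.mem_iUnion.mp y.2
    set x' : ↥(A α ∪ A β) := ⟨x.1, Or.inl hxα⟩
    set y' : ↥(A α ∪ A β) := ⟨y.1, Or.inr hyβ⟩
    have hy' : y' ∈ interior (Metric.closedBall x' r) := by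
      rw [mem_interior_iff_mem_nhds, Metric.mem_nhds_iff]
      refine ⟨ε, hε, ?_⟩
      intro z hz
      have hzU : z.1 ∈ ⋃ γ, A γ := by
        rcases z.2 with hz' | hz'
        · exact Set.mem_iUnion.mpr ⟨α, hz'⟩
        · exact Set.mem_iUnion.mpr ⟨β, hz'⟩
      have : (⟨z.1, hzU⟩ : ↥(⋃ γ, A γ)) ∈ Metric.ball y ε := by
        simpa [Metric.mem_ball, Subtype.dist_eq] using hz
      have := hball this
      simpa [Metric.mem_closedBall, Subtype.dist_eq] using this
    rw [h α β x' r hr] at hy'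
    simpa [Metric.mem_ball, Subtype.dist_eq] using hy'
  · exact Metric.isOpen_ball.subset_interior_iff.mpr Metric.ball_subset_closedBall
end

section
/- Let d₁ and d₂ be two metrics on the same set X inducing the same topology, and suppose that for all x, y, z in X, d₁(x,z) < d₁(x,y) implies d₂(x,z) < d₂(x,y). If d₁ is sleek for X, then d₂ is sleek for X. -/
/-- If `d₁` and `d₂` are equivalent metrics on `X` with `d₁ x z < d₁ x y` implying
`d₂ x z < d₂ x y`, and `d₁` is sleek, then `d₂` is sleek. -/
theorem sleek_of_comparison {X : Type*} (m₁ m₂ : MetricSpace X)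
    (htop : m₁.toUniformSpace.toTopologicalSpace = m₂.toUniformSpace.toTopologicalSpace)
    (hmono : ∀ x y z : X,
      @dist X m₁.toPseudoMetricSpace.toDist x z < @dist X m₁.toPseudoMetricSpace.toDist x y →
      @dist X m₂.toPseudoMetricSpace.toDist x z < @dist X m₂.toPseudoMetricSpace.toDist x y)
    (h₁ : IsSleekM m₁) : IsSleekM m₂ := by
  letI : MetricSpace X := m₂
  intro x r hr
  refine subset_antisymm ?_ Metric.ball_subset_interior_closedBall
  intro y hy
  have hcb : y ∈ Metric.closedBall x r := interior_subset hy
  have hle : dist y x ≤ r := Metric.mem_closedBall.mp hcb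
  rw [Metric.mem_ball]
  by_contra hlt
  have heq : dist y x = r := le_antisymm hle (not_lt.mp hlt)
  have hne : y ≠ x := by
    intro h
    rw [h, dist_self] at heq
    exact hr.ne heq
  set s := @dist X m₁.toPseudoMetricSpace.toDist y x with hs_def
  have hs : 0 < s := (@dist_pos X m₁ y x).mpr hne
  -- closedBall₂ x r ⊆ closedBall₁ x s
  have hsub : Metric.closedBall x r ⊆ @Metric.closedBall X m₁.toPseudoMetricSpace x s := by
    intro z hz
    have hz' : dist z x ≤ r := hz
    by_contra hz₁
    have h1 : s < @dist X m₁.toPseudoMetricSpace.toDist z x := not_le.mp hz₁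
    have h2 : @dist X m₁.toPseudoMetricSpace.toDist x y <
        @dist X m₁.toPseudoMetricSpace.toDist x z := by
      rwa [@dist_comm X m₁.toPseudoMetricSpace x y, @dist_comm X m₁.toPseudoMetricSpace x z,
        ← hs_def]
    have h3 := hmono x z y h2
    rw [dist_comm x y, heq, dist_comm x z] at h3
    exact absurd hz' (not_le.mpr h3)
  -- y is in the m₁-interior of closedBall₁ x s
  have hmem : y ∈ @interior X m₁.toUniformSpace.toTopologicalSpace
      (@Metric.closedBall X m₁.toPseudoMetricSpace x s) := by
    rw [htop, mem_interior_iff_mem_nhds]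
    exact Filter.mem_of_superset (mem_interior_iff_mem_nhds.mp hy) hsub
  rw [h₁ x s hs, @Metric.mem_ball X m₁.toPseudoMetricSpace] at hmem
  exact absurd hmem (lt_irrefl s)
end

section
/- Let {(X_k, d_k)}_{k=1}^∞ be a countable family of metric spaces, each with finite diameter bounded by 1 (after rescaling), and let X = ∏_k X_k with the metric D(x,y) = Σ_{k=1}^∞ d_k(x_k, y_k) / 2^k. If every d_k is sleek for X_k, then D is sleek for X. -/
lemma sleek_aux {Y : Type*} [MetricSpace Y] (x : Y) (r : ℝ)
    (h : ∀ y, dist x y = r → ∀ ε > 0, ∃ z : Y, r < dist x z ∧ dist y z < ε) :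
    interior (Metric.closedBall x r) = Metric.ball x r := by
  apply Set.Subset.antisymm
  · intro y hy
    by_contra hball
    rw [Metric.mem_ball] at hball
    have hclos : y ∈ closure (Metric.closedBall x r)ᶜ := by
      rcases (le_of_not_gt hball).eq_or_lt with heq | hlt
      · rw [Metric.mem_closure_iff]
        intro ε hε
        obtain ⟨z, hz1, hz2⟩ := h y (by rw [dist_comm]; exact heq.symm) ε hε
        refine ⟨z, ?_, hz2⟩
        rw [Set.mem_compl_iff, Metric.mem_closedBall, not_le, dist_comm]
        exact hz1
      · apply subset_closure
        rw [Set.mem_compl_iff, Metric.mem_closedBall, not_le]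
        exact hlt
    rw [closure_compl] at hclos
    exact hclos hy
  · exact interior_maximal Metric.ball_subset_closedBall Metric.isOpen_ball


theorem sleek_product' {X : ℕ → Type*} [∀ k, MetricSpace (X k)]
    (hdiam : ∀ (k : ℕ) (x y : X k), dist x y ≤ 1)
    (D : MetricSpace (∀ k, X k))
    (hD : ∀ x y : ∀ k, X k,
      @dist _ D.toPseudoMetricSpace.toDist x y = ∑' k : ℕ, dist (x k) (y k) / 2 ^ (k + 1))
    (hsleek : ∀ k, ∀ (x : X k) (r : ℝ), 0 < r →
      interior (Metric.closedBall x r) = Metric.ball x r) :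
    ∀ (x : ∀ k, X k) (r : ℝ), 0 < r →
    @interior _ D.toUniformSpace.toTopologicalSpace
        (@Metric.closedBall _ D.toPseudoMetricSpace x r) =
      @Metric.ball _ D.toPseudoMetricSpace x r := by
  intro x r hr
  have hsum : ∀ u v : ∀ k, X k, Summable fun k => dist (u k) (v k) / 2 ^ (k + 1) := by
    intro u v
    refine Summable.of_nonneg_of_le (fun k => by positivity) (fun k => ?_)
      ((summable_geometric_two).mul_left (1/2))
    have h12 : (1/2 : ℝ) * (1/2)^k = 1 / 2^(k+1) := by
      rw [one_div, inv_pow, pow_succ]; ring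
    rw [h12]
    gcongr
    · exact hdiam k _ _
  refine @sleek_aux _ D x r ?_
  intro y hxy ε hε
  -- find coordinate with positive distance
  have hk : ∃ k, 0 < dist (x k) (y k) := by
    by_contra hcon
    push_neg at hcon
    have hz : ∀ k, dist (x k) (y k) = 0 := fun k => le_antisymm (hcon k) dist_nonneg
    rw [hD] at hxy
    simp only [hz, zero_div, tsum_zero] at hxy
    linarith
  obtain ⟨k, hk⟩ := hk
  have hyk : y k ∈ closure (Metric.closedBall (x k) (dist (x k) (y k)))ᶜ := by
    rw [closure_compl, Set.mem_compl_iff, hsleek k (x k) _ hk, Metric.mem_ball, dist_comm]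
    exact lt_irrefl _
  obtain ⟨w, hw1, hw2⟩ := Metric.mem_closure_iff.mp hyk (ε * 2 ^ (k + 1)) (by positivity)
  rw [Set.mem_compl_iff, Metric.mem_closedBall, not_le] at hw1
  set z := Function.update y k w with hzdef
  have hzk : z k = w := Function.update_self k w y
  have hzj : ∀ j, j ≠ k → z j = y j := fun j hj => Function.update_of_ne hj w y
  refine ⟨z, ?_, ?_⟩
  · -- r < dist x z
    have h1 := Summable.tsum_eq_add_tsum_ite (hsum x z) k
    have h2 := Summable.tsum_eq_add_tsum_ite (hsum x y) k
    have htail : (∑' j, if j = k then 0 else dist (x j) (z j) / 2 ^ (j + 1))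
        = ∑' j, if j = k then 0 else dist (x j) (y j) / 2 ^ (j + 1) := by
      apply tsum_congr
      intro j
      by_cases hj : j = k
      · simp [hj]
      · simp only [hj, if_false, hzj j hj]
    have hxz : dist x z = dist x y
        + (dist (x k) (z k) - dist (x k) (y k)) / 2 ^ (k + 1) := by
      rw [hD x z, hD x y, h1, h2, htail]
      ring
    rw [hxz, hxy, hzk]
    have : 0 < (dist (x k) w - dist (x k) (y k)) / 2 ^ (k + 1) := by
      apply div_pos _ (by positivity)
      rw [dist_comm (x k) w]
      linarith
    linarith
  · -- dist y z < ε
    rw [hD]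
    have hsingle : (∑' j, dist (y j) (z j) / 2 ^ (j + 1))
        = dist (y k) (z k) / 2 ^ (k + 1) := by
      apply tsum_eq_single
      intro j hj
      rw [hzj j hj]
      simp
    rw [hsingle, hzk, div_lt_iff₀ (by positivity)]
    exact hw2


/-- If each factor of a countable product of metric spaces of diameter at most `1` is
sleek, then the product metric `D x y = ∑ₖ dₖ (x k) (y k) / 2 ^ (k+1)` is sleek. -/
theorem sleek_product {X : ℕ → Type*} [∀ k, MetricSpace (X k)]
    (hdiam : ∀ (k : ℕ) (x y : X k), dist x y ≤ 1)
    (D : MetricSpace (∀ k, X k))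
    (hD : ∀ x y : ∀ k, X k,
      @dist _ D.toPseudoMetricSpace.toDist x y = ∑' k : ℕ, dist (x k) (y k) / 2 ^ (k + 1))
    (hsleek : ∀ k, IsSleek (X k)) :
    IsSleekM D :=
  fun x r hr => sleek_product' hdiam D hD hsleek x r hr
end

section
/- A countable product of sleek metrizable spaces is sleek metrizable: if for each k in ℕ the space X_k admits a sleek metric d_k inducing its topology, then the product space ∏_k X_k (with the product topology) admits a sleek metric inducing its topology. -/
noncomputable section SleekAux

open Metric Set

namespace SleekProd

/-- The standard bounding function `t ↦ t / (1 + t)`. -/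
def sg (t : ℝ) : ℝ := t / (1 + t)

lemma sg_zero : sg 0 = 0 := by simp [sg]

lemma sg_nonneg {t : ℝ} (ht : 0 ≤ t) : 0 ≤ sg t :=
  div_nonneg ht (by linarith)

lemma sg_le_self {t : ℝ} (ht : 0 ≤ t) : sg t ≤ t := by
  rw [sg, div_le_iff₀ (by linarith)]; nlinarith

lemma sg_lt_one {t : ℝ} (ht : 0 ≤ t) : sg t < 1 := by
  rw [sg, div_lt_one (by linarith)]; linarith

lemma sg_mono {a b : ℝ} (ha : 0 ≤ a) (hab : a ≤ b) : sg a ≤ sg b := by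
  rw [sg, sg, div_le_div_iff₀ (by linarith) (by linarith)]; nlinarith

lemma sg_strict {a b : ℝ} (ha : 0 ≤ a) (hab : a < b) : sg a < sg b := by
  rw [sg, sg, div_lt_div_iff₀ (by linarith) (by linarith)]; nlinarith

lemma sg_subadd {a b : ℝ} (ha : 0 ≤ a) (hb : 0 ≤ b) : sg (a + b) ≤ sg a + sg b := by
  rw [sg, sg, sg, div_add_div _ _ (by linarith : (1:ℝ) + a ≠ 0) (by linarith : (1:ℝ) + b ≠ 0),
    div_le_div_iff₀ (by linarith) (by positivity)]
  nlinarith [mul_nonneg ha hb, mul_nonneg (mul_nonneg ha hb) (add_nonneg ha hb)]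

lemma sg_eq_zero {t : ℝ} (ht : 0 ≤ t) (h : sg t = 0) : t = 0 := by
  rw [sg, div_eq_zero_iff] at h
  rcases h with h | h
  · exact h
  · linarith

/-- weights -/
def w (k : ℕ) : ℝ := (2 : ℝ)⁻¹ ^ k

lemma w_pos (k : ℕ) : 0 < w k := by rw [w]; positivity

lemma w_le_one (k : ℕ) : w k ≤ 1 := pow_le_one₀ (by norm_num) (by norm_num)

lemma w_anti {k l : ℕ} (h : k ≤ l) : w l ≤ w k :=
  pow_le_pow_of_le_one (by norm_num) (by norm_num) h

variable {Y : ℕ → Type*} [mY : ∀ k, MetricSpace (Y k)]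

/-- coordinate contribution -/
def fD (k : ℕ) (x y : ∀ k, Y k) : ℝ := w k * sg (dist (x k) (y k))

lemma fD_nonneg (k : ℕ) (x y : ∀ k, Y k) : 0 ≤ fD k x y :=
  mul_nonneg (w_pos k).le (sg_nonneg dist_nonneg)

lemma fD_lt_w (k : ℕ) (x y : ∀ k, Y k) : fD k x y < w k := by
  have := sg_lt_one (dist_nonneg (x := x k) (y := y k))
  calc fD k x y < w k * 1 := by
        exact mul_lt_mul_of_pos_left this (w_pos k)
    _ = w k := mul_one _

lemma fD_le_one (k : ℕ) (x y : ∀ k, Y k) : fD k x y ≤ 1 :=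
  (fD_lt_w k x y).le.trans (w_le_one k)

lemma fD_le_dist (k : ℕ) (x y : ∀ k, Y k) : fD k x y ≤ dist (x k) (y k) :=
  (mul_le_of_le_one_left (sg_nonneg dist_nonneg) (w_le_one k)).trans
    (sg_le_self dist_nonneg)

/-- the product distance -/
def sD (x y : ∀ k, Y k) : ℝ := ⨆ k, fD k x y

lemma sD_bdd (x y : ∀ k, Y k) : BddAbove (Set.range fun k => fD k x y) :=
  ⟨1, by rintro _ ⟨k, rfl⟩; exact fD_le_one k x y⟩

lemma fD_le_sD (k : ℕ) (x y : ∀ k, Y k) : fD k x y ≤ sD x y :=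
  le_ciSup (sD_bdd x y) k

lemma sD_le {x y : ∀ k, Y k} {c : ℝ} (h : ∀ k, fD k x y ≤ c) : sD x y ≤ c :=
  ciSup_le h

lemma sD_nonneg (x y : ∀ k, Y k) : 0 ≤ sD x y :=
  (fD_nonneg 0 x y).trans (fD_le_sD 0 x y)

lemma sD_self (x : ∀ k, Y k) : sD x x = 0 :=
  le_antisymm (sD_le fun k => by simp [fD, sg_zero]) (sD_nonneg x x)

lemma sD_comm (x y : ∀ k, Y k) : sD x y = sD y x := by
  simp only [sD, fD, dist_comm]

lemma sD_triangle (x y z : ∀ k, Y k) : sD x z ≤ sD x y + sD y z := by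
  refine sD_le fun k => ?_
  have h1 : sg (dist (x k) (z k)) ≤ sg (dist (x k) (y k)) + sg (dist (y k) (z k)) :=
    (sg_mono dist_nonneg (dist_triangle _ _ _)).trans
      (sg_subadd dist_nonneg dist_nonneg)
  calc fD k x z ≤ w k * (sg (dist (x k) (y k)) + sg (dist (y k) (z k))) :=
        mul_le_mul_of_nonneg_left h1 (w_pos k).le
    _ = fD k x y + fD k y z := by rw [fD, fD]; ring
    _ ≤ sD x y + sD y z := add_le_add (fD_le_sD k x y) (fD_le_sD k y z)

lemma eq_of_sD_eq_zero (x y : ∀ k, Y k) (h : sD x y = 0) : x = y := by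
  funext k
  have h1 : fD k x y ≤ 0 := h ▸ fD_le_sD k x y
  have h2 : sg (dist (x k) (y k)) = 0 := by
    have := fD_nonneg k x y
    have hz : fD k x y = 0 := le_antisymm h1 this
    have := w_pos k
    rw [fD, mul_eq_zero] at hz
    rcases hz with hz | hz
    · linarith
    · exact hz
  exact eq_of_dist_eq_zero (sg_eq_zero dist_nonneg h2)

lemma dist_lt_of_fD_lt {k : ℕ} {x y : ∀ k, Y k} {ε : ℝ} (hε : 0 ≤ ε)
    (h : fD k x y < w k * sg ε) : dist (x k) (y k) < ε := by
  by_contra hc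
  push_neg at hc
  have h1 : sg ε ≤ sg (dist (x k) (y k)) := sg_mono hε hc
  have h2 : w k * sg ε ≤ fD k x y := by
    rw [fD]
    exact mul_le_mul_of_nonneg_left h1 (w_pos k).le
  linarith

/-- compatibility of `sD` with the product topology -/
lemma sD_topology :
    ∀ s : Set (∀ k, Y k), IsOpen s ↔ ∀ x ∈ s, ∃ ε > 0, ∀ y, sD x y < ε → y ∈ s := by
  intro s
  constructor
  · intro hs x hx
    obtain ⟨I, u, hu, hsub⟩ := isOpen_pi_iff.1 hs x hx
    have hδ : ∀ k, ∃ d > 0, k ∈ I → Metric.ball (x k) d ⊆ u k := by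
      intro k
      by_cases hk : k ∈ I
      · obtain ⟨d, hd, hball⟩ := Metric.isOpen_iff.1 (hu k hk).1 (x k) (hu k hk).2
        exact ⟨d, hd, fun _ => hball⟩
      · exact ⟨1, one_pos, fun h => absurd h hk⟩
    choose δ hδpos hδball using hδ
    set J : Finset ℕ := insert 0 I with hJ
    have hJne : J.Nonempty := Finset.insert_nonempty 0 I
    refine ⟨J.inf' hJne (fun k => w k * sg (δ k)), ?_, ?_⟩
    · rw [gt_iff_lt, Finset.lt_inf'_iff]
      intro k _
      exact mul_pos (w_pos k) (by
        have := sg_strict le_rfl (hδpos k)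
        simpa [sg_zero] using this)
    · intro y hy
      apply hsub
      rw [Set.mem_pi]
      intro k hk
      apply hδball k hk
      rw [Metric.mem_ball, dist_comm]
      refine dist_lt_of_fD_lt (hδpos k).le
        (lt_of_le_of_lt (fD_le_sD k x y) (lt_of_lt_of_le hy ?_))
      exact Finset.inf'_le _ (Finset.mem_insert_of_mem hk)
  · intro H
    rw [isOpen_iff_forall_mem_open]
    intro x hx
    obtain ⟨ε, hε, hball⟩ := H x hx
    obtain ⟨N, hN⟩ := exists_pow_lt_of_lt_one (half_pos hε) (by norm_num : (2:ℝ)⁻¹ < 1)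
    refine ⟨Set.pi (↑(Finset.range N)) (fun k => Metric.ball (x k) (ε / 2)), ?_, ?_, ?_⟩
    · intro y hy
      apply hball
      have : sD x y ≤ ε / 2 := by
        refine sD_le fun k => ?_
        by_cases hk : k < N
        · have hyk : dist (x k) (y k) < ε / 2 := by
            have := hy k (by simpa using hk)
            rw [Metric.mem_ball, dist_comm] at this
            exact this
          exact (fD_le_dist k x y).trans hyk.le
        · push_neg at hk
          exact (fD_lt_w k x y).le.trans ((w_anti hk).trans hN.le)
      linarith
    · exact isOpen_set_pi (Finset.range N).finite_toSet fun k _ => Metric.isOpen_ball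
    · intro k _
      exact Metric.mem_ball_self (half_pos hε)

/-- The sleek metric on the product. -/
def sM : MetricSpace (∀ k, Y k) :=
  MetricSpace.ofDistTopology sD sD_self sD_comm sD_triangle sD_topology eq_of_sD_eq_zero

lemma sM_dist (x y : ∀ k, Y k) :
    @dist _ (sM (Y := Y)).toPseudoMetricSpace.toDist x y = sD x y := rfl

/-- The key theorem in the clean setting: the product of a sequence of sleek metric
spaces carries a sleek metric compatible with the product topology. -/
theorem sleek_pi (hs : ∀ k, IsSleekM (mY k)) :
    ∃ M : MetricSpace (∀ k, Y k),
      M.toUniformSpace.toTopologicalSpace =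
        (Pi.topologicalSpace : TopologicalSpace (∀ k, Y k)) ∧ IsSleekM M := by
  refine ⟨sM, rfl, ?_⟩
  intro x r hr
  suffices h' : interior (@Metric.closedBall _ (sM (Y := Y)).toPseudoMetricSpace x r) =
      @Metric.ball _ (sM (Y := Y)).toPseudoMetricSpace x r from h'
  apply le_antisymm
  · -- interior of closed ball ⊆ open ball
    intro y hy
    show sD y x < r
    rw [sD_comm]
    have hyr : sD x y ≤ r := by
      have h0 := interior_subset hy
      have h1 : sD y x ≤ r := h0
      rw [sD_comm]
      exact h1
    by_contra hc
    push_neg at hc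
    have heq : sD x y = r := le_antisymm hyr hc
    -- a metric-ball neighbourhood of y inside the closed ball
    have hy' : ∃ ε > 0, ∀ z, sD y z < ε → sD x z ≤ r := by
      have hop : IsOpen (interior (@Metric.closedBall _ (sM (Y := Y)).toPseudoMetricSpace x r)) :=
        isOpen_interior
      obtain ⟨ε, hε, hball⟩ := (sD_topology _).1 hop y hy
      refine ⟨ε, hε, fun z hz => ?_⟩
      have h0 := interior_subset (hball z hz)
      have h1 : sD z x ≤ r := h0
      rw [sD_comm]
      exact h1
    obtain ⟨ε, hε, hball⟩ := hy'
    -- find a coordinate where the sup is attained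
    obtain ⟨N, hN⟩ := exists_pow_lt_of_lt_one (half_pos hr) (by norm_num : (2:ℝ)⁻¹ < 1)
    obtain ⟨k₀, _, hk₀max⟩ := Finset.exists_max_image (Finset.range (N + 1))
      (fun k => fD k x y) ⟨0, Finset.mem_range.2 (Nat.succ_pos N)⟩
    have hattain : fD k₀ x y = r := by
      refine le_antisymm (heq ▸ fD_le_sD k₀ x y) ?_
      have hmax : sD x y ≤ max (fD k₀ x y) (r / 2) := by
        refine sD_le fun k => ?_
        by_cases hk : k < N + 1
        · exact le_max_of_le_left (hk₀max k (Finset.mem_range.2 hk))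
        · push_neg at hk
          refine le_max_of_le_right ?_
          exact (fD_lt_w k x y).le.trans ((w_anti (Nat.le_of_succ_le hk)).trans hN.le)
      rw [heq] at hmax
      rcases le_max_iff.1 hmax with h | h
      · exact h
      · linarith
    have hwr : r < w k₀ := hattain ▸ fD_lt_w k₀ x y
    set s := dist (x k₀) (y k₀) with hsdef
    have hs0 : 0 < s := by
      rcases lt_or_eq_of_le (dist_nonneg (x := x k₀) (y := y k₀)) with h | h
      · exact h
      · exfalso
        have h0 : fD k₀ x y = 0 := by rw [fD, ← h, sg_zero, mul_zero]
        rw [hattain] at h0; linarith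
    -- y k₀ lies on the sphere of radius s; by sleekness it is not interior to the closed ball
    have hnotint : y k₀ ∉ interior (Metric.closedBall (x k₀) s) := by
      rw [hs k₀ (x k₀) s hs0, Metric.mem_ball, dist_comm]
      exact lt_irrefl s
    -- hence there are points close to y k₀ but further than s from x k₀
    have hz : ∃ z₀ : Y k₀, dist (y k₀) z₀ < ε ∧ s < dist (x k₀) z₀ := by
      by_contra hcon
      push_neg at hcon
      apply hnotint
      rw [mem_interior]
      refine ⟨Metric.ball (y k₀) ε, ?_, Metric.isOpen_ball, Metric.mem_ball_self hε⟩
      intro u hu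
      rw [Metric.mem_ball] at hu
      rw [Metric.mem_closedBall]
      have := hcon u (by rwa [dist_comm])
      rwa [dist_comm]
    obtain ⟨z₀, hz₀y, hz₀x⟩ := hz
    set z : ∀ k, Y k := Function.update y k₀ z₀ with hzdef
    have hzk₀ : z k₀ = z₀ := Function.update_self k₀ z₀ y
    have hyz : sD y z < ε := by
      have hle : sD y z ≤ dist (y k₀) z₀ := by
        refine sD_le fun k => ?_
        by_cases hk : k = k₀
        · subst hk
          calc fD k y z ≤ dist (y k) (z k) := fD_le_dist k y z
            _ = dist (y k) z₀ := by rw [hzk₀]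
        · have hzk : z k = y k := Function.update_of_ne hk z₀ y
          have : fD k y z = 0 := by simp [fD, hzk, sg_zero]
          rw [this]
          exact dist_nonneg
      linarith
    have hxz : sD x z ≤ r := hball z hyz
    have hle' : fD k₀ x z ≤ r := (fD_le_sD k₀ x z).trans hxz
    have hgt : r < fD k₀ x z := by
      have h1 : sg s < sg (dist (x k₀) (z k₀)) := by
        rw [hzk₀]; exact sg_strict hs0.le hz₀x
      have h2 : w k₀ * sg s < w k₀ * sg (dist (x k₀) (z k₀)) :=
        mul_lt_mul_of_pos_left h1 (w_pos k₀)
      calc r = fD k₀ x y := hattain.symm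
        _ < fD k₀ x z := h2
    linarith
  · -- open ball ⊆ interior of closed ball
    refine interior_maximal ?_ ?_
    · intro u hu
      have hu' : sD u x < r := hu
      show sD u x ≤ r
      exact hu'.le
    · rw [sD_topology]
      intro u hu
      have hu' : sD u x < r := hu
      refine ⟨r - sD u x, by linarith, fun v hv => ?_⟩
      show sD v x < r
      calc sD v x ≤ sD v u + sD u x := sD_triangle v u x
        _ = sD u v + sD u x := by rw [sD_comm]
        _ < r := by linarith

end SleekProd

end SleekAux

/-- A countable product of sleek metrizable spaces is sleek metrizable. -/
theorem sleek_metrizable_product {X : ℕ → Type*} [∀ k, TopologicalSpace (X k)]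
    (h : ∀ k, ∃ m : MetricSpace (X k),
      m.toUniformSpace.toTopologicalSpace = (inferInstance : TopologicalSpace (X k)) ∧ IsSleekM m) :
    ∃ M : MetricSpace (∀ k, X k),
      M.toUniformSpace.toTopologicalSpace = Pi.topologicalSpace ∧ IsSleekM M := by
  rename_i inst
  choose m hm1 hm2 using h
  have e : inst = fun k => (m k).toUniformSpace.toTopologicalSpace :=
    funext fun k => (hm1 k).symm
  subst e
  exact SleekProd.sleek_pi (mY := m) hm2
end
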